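/- (Count-aggregation correctness) Let s_C be a condensed solution sequence and s_F a flat solution sequence representing it. Then the length of s_F equals the sum, over the condensed mappings m occurring in s_C (with multiplicity), of the cardinality |Ξ(m)| of their flat expansions; consequently, counting the flat solutions can be computed from the condensed solutions as Σ_{m ∈ s_C} Π_{x ∈ dom(m)} |vals_m(x)|. -/

import Mathlib

/-- A binding of a variable in a condensed solution mapping: it is bound either
in the value component (`nu`, to a term), the identifier component (`iota`, to a
term identifier), the condensed component (`zeta`, to a pair of a graph-name
identifier and a set of versions), or the unbound-graph component (`psi`).
A condensed solution mapping `Var → Option (Binding Term V)` is thereby exactly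
a quadruple of partial functions with pairwise disjoint domains. -/
inductive Binding (Term V : Type*) where
  | nu (t : Term)
  | iota (n : ℕ)
  | zeta (n : ℕ) (Vs : Set V)
  | psi

/-- The value set of a binding: a singleton `{t}` for a ν-binding, the singleton
`{idtoval n}` for an ι-binding, the set of versioned IRIs `vis (v, idtoval n)`
for `v` in the version set for a ζ-binding, and the set of all versioned IRIs
`vis (v, g)` with `g ∈ NG` for a ψ-binding. -/
def bvals {Term V : Type*} (idtoval : ℕ → Term) (vis : V × Term → Term)
    (NG : Set Term) : Binding Term V → Set Term
  | .nu t => {t}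
  | .iota n => {idtoval n}
  | .zeta n Vs => {t | ∃ v ∈ Vs, t = vis (v, idtoval n)}
  | .psi => {t | ∃ v, ∃ g ∈ NG, t = vis (v, g)}

/-- The value set `vals_m(x)` of a variable under a condensed solution mapping. -/
def valsM {Var Term V : Type*} (idtoval : ℕ → Term) (vis : V × Term → Term)
    (NG : Set Term) (m : Var → Option (Binding Term V)) (x : Var) : Set Term :=
  match m x with
  | none => ∅
  | some b => bvals idtoval vis NG b

/-- The domain of a (condensed or flat) partial mapping. -/
def domM {Var β : Type*} (m : Var → Option β) : Set Var := {x | m x ≠ none}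

/-- The flat expansion `Ξ(m)` of a condensed solution mapping `m`: the set of
partial functions `f : Var ⇀ Term` with the same domain as `m` and with
`f x ∈ vals_m(x)` for every `x` in that domain. -/
def Xi {Var Term V : Type*} (idtoval : ℕ → Term) (vis : V × Term → Term)
    (NG : Set Term) (m : Var → Option (Binding Term V)) :
    Set (Var → Option Term) :=
  {f | (∀ x, m x = none → f x = none) ∧
       (∀ x b, m x = some b → ∃ t, f x = some t ∧ t ∈ bvals idtoval vis NG b)}

/-- Two flat mappings are flat-compatible if they agree on every variable in
the intersection of their domains. -/
def FlatCompat {Var Term : Type*} (f₁ f₂ : Var → Option Term) : Prop :=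
  ∀ x t₁ t₂, f₁ x = some t₁ → f₂ x = some t₂ → t₁ = t₂

/-- Two condensed solution mappings are condensed-compatible if: their ν-components
agree on shared ν-variables, their ι-components agree on shared ι-variables, and
on shared ζ-variables the graph-name identifiers coincide and the version sets
intersect. -/
def CondCompat {Var Term V : Type*} (m₁ m₂ : Var → Option (Binding Term V)) : Prop :=
  (∀ x t₁ t₂, m₁ x = some (.nu t₁) → m₂ x = some (.nu t₂) → t₁ = t₂) ∧
  (∀ x n₁ n₂, m₁ x = some (.iota n₁) → m₂ x = some (.iota n₂) → n₁ = n₂) ∧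
  (∀ x n₁ V₁ n₂ V₂, m₁ x = some (.zeta n₁ V₁) → m₂ x = some (.zeta n₂ V₂) →
    n₁ = n₂ ∧ (V₁ ∩ V₂).Nonempty)

/-- Two bindings are in the same representation component. -/
def SameRep {Term V : Type*} : Binding Term V → Binding Term V → Prop
  | .nu _, .nu _ => True
  | .iota _, .iota _ => True
  | .zeta _ _, .zeta _ _ => True
  | .psi, .psi => True
  | _, _ => False

open Classical in
/-- A flat solution sequence `sF` represents a condensed solution sequence `sC`
if the multiset of flat mappings in `sF` equals the sum over the condensed
mappings `m` in `sC` (with multiplicity) of the multisets underlying `Ξ(m)`;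
equivalently, every flat mapping `f` occurs in `sF` exactly as many times as
there are mappings `m` in `sC` with `f ∈ Ξ(m)`. -/
def Represents {Var Term V : Type*} (idtoval : ℕ → Term) (vis : V × Term → Term)
    (NG : Set Term) (sF : List (Var → Option Term))
    (sC : List (Var → Option (Binding Term V))) : Prop :=
  ∀ f : Var → Option Term,
    (sF : Multiset (Var → Option Term)).count f =
      (sC.map (fun m => if f ∈ Xi idtoval vis NG m then 1 else 0)).sum

open Classical in
lemma valsM_finite {Var Term V : Type*} (idtoval : ℕ → Term) (vis : V × Term → Term)
    (NG : Set Term) (hfin : ∀ b : Binding Term V, (bvals idtoval vis NG b).Finite)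
    (m : Var → Option (Binding Term V)) (x : Var) :
    (valsM idtoval vis NG m x).Finite := by
  unfold valsM
  cases m x with
  | none => exact Set.finite_empty
  | some b => exact hfin b

open Classical in
lemma Xi_finset {Var Term V : Type*} (idtoval : ℕ → Term) (vis : V × Term → Term)
    (NG : Set Term) (hfin : ∀ b : Binding Term V, (bvals idtoval vis NG b).Finite)
    (m : Var → Option (Binding Term V)) (hdm : (domM m).Finite) :
    ∃ S : Finset (Var → Option Term), ↑S = Xi idtoval vis NG m ∧
      S.card = ∏ x ∈ hdm.toFinset,
        (valsM_finite idtoval vis NG hfin m x).toFinset.card := by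
  classical
  set D := hdm.toFinset with hD
  have hmemD : ∀ x, x ∈ D ↔ m x ≠ none := by
    intro x; simp [hD, Set.Finite.mem_toFinset, domM]
  refine ⟨(D.pi (fun x => (valsM_finite idtoval vis NG hfin m x).toFinset)).image
      (fun g x => if h : x ∈ D then some (g x h) else none), ?_, ?_⟩
  · ext f
    simp only [Finset.coe_image, Set.mem_image, Finset.mem_coe, Finset.mem_pi]
    constructor
    · rintro ⟨g, hg, rfl⟩
      constructor
      · intro x hx
        have hxD : x ∉ D := by simp [hmemD, hx]
        simp [hxD]
      · intro x b hb
        have hxD : x ∈ D := by simp [hmemD, hb]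
        refine ⟨g x hxD, by simp [hxD], ?_⟩
        have := hg x hxD
        rw [Set.Finite.mem_toFinset] at this
        simpa [valsM, hb] using this
    · rintro ⟨h1, h2⟩
      have hsome : ∀ x (hx : x ∈ D), (f x).isSome := by
        intro x hx
        rw [hmemD] at hx
        obtain ⟨b, hb⟩ := Option.ne_none_iff_exists'.mp hx
        obtain ⟨t, ht, _⟩ := h2 x b hb
        simp [ht]
      refine ⟨fun x hx => (f x).get (hsome x hx), ?_, ?_⟩
      · intro x hx
        rw [Set.Finite.mem_toFinset]
        have hx' := hx
        rw [hmemD] at hx'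
        obtain ⟨b, hb⟩ := Option.ne_none_iff_exists'.mp hx'
        obtain ⟨t, ht, htb⟩ := h2 x b hb
        simp only [ht, Option.get_some]
        simpa [valsM, hb] using htb
      · funext x
        by_cases hx : x ∈ D
        · simp [hx]
        · have : m x = none := by
            by_contra h; exact hx ((hmemD x).mpr h)
          simp [hx, h1 x this]
  · rw [Finset.card_image_of_injOn, Finset.card_pi]
    intro g₁ hg₁ g₂ hg₂ heq
    funext x hx
    have := congrFun heq x
    simpa [hx] using this

open Classical in
lemma Xi_ncard {Var Term V : Type*} (idtoval : ℕ → Term) (vis : V × Term → Term)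
    (NG : Set Term) (hfin : ∀ b : Binding Term V, (bvals idtoval vis NG b).Finite)
    (m : Var → Option (Binding Term V)) (hdm : (domM m).Finite) :
    (Xi idtoval vis NG m).ncard = ∏ᶠ x ∈ domM m, (valsM idtoval vis NG m x).ncard := by
  obtain ⟨S, hS, hcard⟩ := Xi_finset idtoval vis NG hfin m hdm
  rw [← hS, Set.ncard_coe_finset, hcard]
  have h4 : ∏ᶠ x ∈ domM m, (valsM idtoval vis NG m x).ncard
      = ∏ x ∈ hdm.toFinset, (valsM idtoval vis NG m x).ncard := by
    conv_lhs => rw [← Set.Finite.coe_toFinset hdm]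
    rw [finprod_mem_coe_finset]
  rw [h4]
  exact Finset.prod_congr rfl fun x _ => (Set.ncard_eq_toFinset_card _ _).symm

open Classical in
lemma card_list_sum {α : Type*} (l : List (Multiset α)) :
    Multiset.card l.sum = (l.map Multiset.card).sum := by
  induction l with
  | nil => simp
  | cons h t ih => simp [ih]

open Classical in
lemma count_list_sum {α : Type*} [DecidableEq α] (a : α) (l : List (Multiset α)) :
    l.sum.count a = (l.map (Multiset.count a)).sum := by
  induction l with
  | nil => simp
  | cons h t ih => simp [ih]

/-- Count-aggregation correctness: if the flat solution sequence `sF` represents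
the condensed solution sequence `sC` (whose mappings have finite domains and
finite value sets), then the length of `sF` equals the sum over the condensed
mappings `m` in `sC` of `|Ξ(m)|`; consequently it equals
`Σ_{m ∈ sC} Π_{x ∈ dom(m)} |vals_m(x)|`. -/
theorem length_eq_sum_card_Xi {Var Term V : Type*}
    (idtoval : ℕ → Term) (vis : V × Term → Term) (NG : Set Term)
    (hid : Function.Injective idtoval) (hvis : Function.Injective vis)
    (hfin : ∀ b : Binding Term V, (bvals idtoval vis NG b).Finite)
    (sF : List (Var → Option Term))
    (sC : List (Var → Option (Binding Term V)))
    (hdom : ∀ m ∈ sC, (domM m).Finite)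
    (hrep : Represents idtoval vis NG sF sC) :
    sF.length = (sC.map (fun m => (Xi idtoval vis NG m).ncard)).sum ∧
    sF.length =
      (sC.map (fun m => ∏ᶠ x ∈ domM m, (valsM idtoval vis NG m x).ncard)).sum := by
  classical
  have hXfin : ∀ m ∈ sC, (Xi idtoval vis NG m).Finite := by
    intro m hm
    obtain ⟨S, hS, _⟩ := Xi_finset idtoval vis NG hfin m (hdom m hm)
    rw [← hS]; exact S.finite_toSet
  have key : sF.length = (sC.map (fun m => (Xi idtoval vis NG m).ncard)).sum := by
    have hmul : (sF : Multiset (Var → Option Term)) =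
        (sC.attach.map (fun p => ((hXfin p.1 p.2).toFinset.val))).sum := by
      refine Multiset.ext.mpr fun f => ?_
      rw [hrep f, count_list_sum, List.map_map]
      have h1 : sC.attach.map (Multiset.count f ∘ fun p => (hXfin p.1 p.2).toFinset.val)
          = sC.attach.map (fun p => if f ∈ Xi idtoval vis NG p.1 then 1 else 0) := by
        refine List.map_congr_left fun p hp => ?_
        simp only [Function.comp]
        by_cases hf : f ∈ Xi idtoval vis NG p.1
        · rw [Multiset.count_eq_one_of_mem (Finset.nodup _)
            (by rw [Finset.mem_val, Set.Finite.mem_toFinset]; exact hf)]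
          simp [hf]
        · rw [Multiset.count_eq_zero_of_notMem
            (by rw [Finset.mem_val, Set.Finite.mem_toFinset]; exact hf)]
          simp [hf]
      rw [h1]
      have h2 : sC.map (fun m => if f ∈ Xi idtoval vis NG m then 1 else 0)
          = sC.attach.map (fun p => if f ∈ Xi idtoval vis NG p.1 then 1 else 0) :=
        (List.attach_map_val (l := sC) (f := fun m => if f ∈ Xi idtoval vis NG m then 1 else 0)).symm
      rw [h2]
    have : sF.length = Multiset.card (sF : Multiset (Var → Option Term)) := by simp
    rw [this, hmul, card_list_sum, List.map_map]
    have h3 : sC.attach.map (Multiset.card ∘ fun p => (hXfin p.1 p.2).toFinset.val)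
        = sC.attach.map (fun p => (Xi idtoval vis NG p.1).ncard) := by
      refine List.map_congr_left fun p hp => ?_
      simp only [Function.comp]
      rw [← Finset.card_def, ← Set.ncard_eq_toFinset_card _ (hXfin p.1 p.2)]
    rw [h3]
    conv_rhs => rw [← List.attach_map_val (l := sC) (f := fun m => (Xi idtoval vis NG m).ncard)]
  refine ⟨key, ?_⟩
  rw [key]
  congr 1
  refine List.map_congr_left fun m hm => ?_
  exact Xi_ncard idtoval vis NG hfin m (hdom m hm)
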